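/- (Cruse's Theorem) Let r ≤ n. An r×r symmetric latin rectangle L on the symbol set [n] can be extended to an n×n symmetric latin square on [n] if and only if: (i) e_ℓ ≥ 2r−n for every ℓ ∈ [n]; and (ii) |{ℓ ∈ [n] : e_ℓ ≡ n (mod 2)}| ≥ r. -/

import Mathlib

open Finset

/-- Number of occurrences of the symbol `ℓ` in the `m × m` array `A` (symbols in `Fin k`). -/
def occ {m k : ℕ} (A : Fin m → Fin m → Fin k) (ℓ : Fin k) : ℕ :=
  (Finset.univ.filter fun p : Fin m × Fin m => A p.1 p.2 = ℓ).card

/-- `A` is a symmetric latin square of order `n` on the symbol set `Fin n`: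
each symbol occurs exactly once in each row and in each column, and `A` is symmetric. -/
def IsSymLS {n : ℕ} (A : Fin n → Fin n → Fin n) : Prop :=
  (∀ i, Function.Bijective (A i)) ∧
  (∀ j, Function.Bijective fun i => A i j) ∧
  (∀ i j, A i j = A j i)

/-- `L` is an `r × r` symmetric latin rectangle on the symbol set `Fin n`:
each symbol occurs at most once in each row and in each column, and `L` is symmetric. -/
def IsSymLatinRect {r n : ℕ} (L : Fin r → Fin r → Fin n) : Prop :=
  (∀ i, Function.Injective (L i)) ∧
  (∀ j, Function.Injective fun i => L i j) ∧
  (∀ i j, L i j = L j i)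

/-- `A` extends `L`: `L` is the top-left `r × r` subarray of `A`. -/
def Extends {r n : ℕ} (h : r ≤ n) (L : Fin r → Fin r → Fin n)
    (A : Fin n → Fin n → Fin n) : Prop :=
  ∀ i j : Fin r, A (Fin.castLE h i) (Fin.castLE h j) = L i j

/-- The number of diagonal cells `A i i` with `i` beyond the first `r` rows holding symbol `ℓ`. -/
def diagTail {n : ℕ} (r : ℕ) (A : Fin n → Fin n → Fin n) (ℓ : Fin n) : ℕ :=
  (Finset.univ.filter fun i : Fin n => r ≤ (i : ℕ) ∧ A i i = ℓ).card




section Basics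
variable {n r : ℕ} {L : Fin r → Fin r → Fin n}

/-- occurrences = number of columns containing the symbol, given column-injectivity. -/
lemma occ_eq_card_cols (hcol : ∀ j, Function.Injective fun i => L i j) (ℓ : Fin n) :
    occ L ℓ = (univ.filter fun j : Fin r => ∃ i, L i j = ℓ).card := by
  classical
  apply Finset.card_bij (fun p _ => p.2)
  · rintro ⟨i, j⟩ hp
    simp only [mem_filter, mem_univ, true_and] at hp ⊢
    exact ⟨i, hp⟩
  · rintro ⟨i, j⟩ hp ⟨i', j'⟩ hp' h
    simp only [mem_filter, mem_univ, true_and] at hp hp'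
    dsimp at h
    subst h
    have : i = i' := hcol j (by dsimp; rw [hp, hp'])
    simp [this]
  · intro j hj
    simp only [mem_filter, mem_univ, true_and] at hj
    obtain ⟨i, hi⟩ := hj
    exact ⟨(i, j), by simp [hi]⟩

lemma occ_eq_card_rows (hrow : ∀ i, Function.Injective (L i)) (ℓ : Fin n) :
    occ L ℓ = (univ.filter fun i : Fin r => ∃ j, L i j = ℓ).card := by
  classical
  apply Finset.card_bij (fun p _ => p.1)
  · rintro ⟨i, j⟩ hp
    simp only [mem_filter, mem_univ, true_and] at hp ⊢
    exact ⟨j, hp⟩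
  · rintro ⟨i, j⟩ hp ⟨i', j'⟩ hp' h
    simp only [mem_filter, mem_univ, true_and] at hp hp'
    dsimp at h
    subst h
    have : j = j' := hrow i (by rw [hp, hp'])
    simp [this]
  · intro i hi
    simp only [mem_filter, mem_univ, true_and] at hi
    obtain ⟨j, hj⟩ := hi
    exact ⟨(i, j), by simp [hj]⟩

/-- In each column there are exactly `n - r` compatible symbols. -/
lemma card_compat_col (hcol : ∀ j, Function.Injective fun i => L i j) (j : Fin r) :
    (univ.filter fun ℓ : Fin n => ∀ i, L i j ≠ ℓ).card + r = n := by
  classical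
  have h1 : (univ.filter fun ℓ : Fin n => ¬ ∀ i, L i j ≠ ℓ) = univ.image (fun i => L i j) := by
    ext ℓ
    simp [not_forall]
  have h2 : (univ.image (fun i => L i j)).card = r := by
    rw [Finset.card_image_of_injective _ (hcol j)]
    simp
  have := Finset.card_filter_add_card_filter_not
    (s := (univ : Finset (Fin n))) (p := fun ℓ => ∀ i, L i j ≠ ℓ)
  rw [h1, h2] at this
  simpa using this

/-- For each symbol, (number of compatible columns) + occ = r. -/
lemma card_compat_sym (hcol : ∀ j, Function.Injective fun i => L i j) (ℓ : Fin n) :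
    (univ.filter fun j : Fin r => ∀ i, L i j ≠ ℓ).card + occ L ℓ = r := by
  classical
  rw [occ_eq_card_cols hcol]
  have h1 : (univ.filter fun j : Fin r => ¬ ∀ i, L i j ≠ ℓ)
      = (univ.filter fun j : Fin r => ∃ i, L i j = ℓ) := by
    ext j; simp [not_forall]
  have := Finset.card_filter_add_card_filter_not
    (s := (univ : Finset (Fin r))) (p := fun j => ∀ i, L i j ≠ ℓ)
  rw [h1] at this
  simpa using this

end Basics


lemma sum_card_le_biUnion_mul {α β : Type*} [DecidableEq α] [DecidableEq β]
    (Y : Finset α) (g : α → Finset β) (m : ℕ)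
    (h : ∀ b : β, (Y.filter fun a => b ∈ g a).card ≤ m) :
    ∑ a ∈ Y, (g a).card ≤ (Y.biUnion g).card * m := by
  classical
  have e1 : ∀ a ∈ Y, (g a).card = ((Y.biUnion g).filter fun b => b ∈ g a).card := by
    intro a ha
    congr 1
    ext b
    simp only [Finset.mem_filter, Finset.mem_biUnion]
    exact ⟨fun hb => ⟨⟨a, ha, hb⟩, hb⟩, fun hb => hb.2⟩
  calc ∑ a ∈ Y, (g a).card
      = ∑ a ∈ Y, ∑ b ∈ Y.biUnion g, (if b ∈ g a then 1 else 0) := by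
        apply Finset.sum_congr rfl
        intro a ha
        rw [e1 a ha, Finset.card_filter]
    _ = ∑ b ∈ Y.biUnion g, ∑ a ∈ Y, (if b ∈ g a then 1 else 0) := Finset.sum_comm
    _ = ∑ b ∈ Y.biUnion g, (Y.filter fun a => b ∈ g a).card := by
        apply Finset.sum_congr rfl
        intro b _
        rw [Finset.card_filter]
    _ ≤ ∑ _b ∈ Y.biUnion g, m := Finset.sum_le_sum fun b _ => h b
    _ = (Y.biUnion g).card * m := by rw [Finset.sum_const, smul_eq_mul]



lemma card_head {n r : ℕ} (hrn : r ≤ n) :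
    (univ.filter fun v : Fin n => v.val < r).card = r := by
  classical
  have : (univ.filter fun v : Fin n => v.val < r) = univ.image (Fin.castLE hrn) := by
    ext v
    simp only [mem_filter, mem_univ, true_and, mem_image]
    constructor
    · intro hv; exact ⟨⟨v.val, hv⟩, Fin.ext rfl⟩
    · rintro ⟨j, rfl⟩; exact j.isLt
  rw [this, Finset.card_image_of_injective _ (Fin.castLE_injective hrn)]
  simp

lemma card_tail {n r : ℕ} (hrn : r ≤ n) :
    (univ.filter fun v : Fin n => r ≤ v.val).card + r = n := by
  classical
  have h1 : (univ.filter fun v : Fin n => ¬ r ≤ v.val).card = r := by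
    have hset : (univ.filter fun v : Fin n => ¬ r ≤ v.val)
        = (univ.filter fun v : Fin n => v.val < r) := by
      ext v; simp
    rw [hset, card_head hrn]
  have := Finset.card_filter_add_card_filter_not
    (s := (univ : Finset (Fin n))) (p := fun v => r ≤ v.val)
  rw [h1] at this
  simpa using this

lemma occ_parity {m k : ℕ} (A : Fin m → Fin m → Fin k) (hsym : ∀ i j, A i j = A j i)
    (ℓ : Fin k) :
    occ A ℓ % 2 = (univ.filter fun i : Fin m => A i i = ℓ).card % 2 := by
  classical
  set P := univ.filter fun p : Fin m × Fin m => A p.1 p.2 = ℓ with hP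
  have hsplit := Finset.card_filter_add_card_filter_not
    (s := P) (p := fun p => p.1 = p.2)
  have hdiag : (P.filter fun p => p.1 = p.2).card
      = (univ.filter fun i : Fin m => A i i = ℓ).card := by
    apply Finset.card_bij (fun p _ => p.1)
    · rintro ⟨i, j⟩ hp
      simp only [hP, mem_filter, mem_univ, true_and] at hp ⊢
      obtain ⟨h1, h2⟩ := hp
      subst h2; exact h1
    · rintro ⟨i, j⟩ hp ⟨i', j'⟩ hp' h
      simp only [hP, mem_filter, mem_univ, true_and] at hp hp'
      obtain ⟨-, h2⟩ := hp; obtain ⟨-, h2'⟩ := hp'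
      subst h2; subst h2'; simp only at h; subst h; rfl
    · intro i hi
      simp only [mem_filter, mem_univ, true_and] at hi
      exact ⟨(i, i), by simp [hP, hi], rfl⟩
  have hofflt : (P.filter fun p => ¬ p.1 = p.2).card
      = 2 * ((P.filter fun p => p.1 < p.2).card) := by
    have h2 := Finset.card_filter_add_card_filter_not
      (s := P.filter fun p => ¬ p.1 = p.2) (p := fun p => p.1 < p.2)
    have e1 : ((P.filter fun p => ¬ p.1 = p.2).filter fun p => p.1 < p.2)
        = P.filter fun p => p.1 < p.2 := by
      rw [Finset.filter_filter]
      apply Finset.filter_congr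
      intro p _
      constructor
      · rintro ⟨-, h⟩; exact h
      · intro h; exact ⟨ne_of_lt h, h⟩
    have e2 : ((P.filter fun p => ¬ p.1 = p.2).filter fun p => ¬ p.1 < p.2).card
        = (P.filter fun p => p.1 < p.2).card := by
      apply Finset.card_bij (fun p _ => (p.2, p.1))
      · rintro ⟨i, j⟩ hp
        simp only [hP, mem_filter, mem_univ, true_and] at hp ⊢
        obtain ⟨⟨h1, h2⟩, h3⟩ := hp
        refine ⟨by rw [hsym]; exact h1, ?_⟩
        exact lt_of_le_of_ne (not_lt.mp h3) (Ne.symm h2)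
      · rintro ⟨i, j⟩ _ ⟨i', j'⟩ _ h
        simp only [Prod.mk.injEq] at h
        simp [Prod.ext_iff, h.1, h.2]
      · rintro ⟨i, j⟩ hp
        simp only [hP, mem_filter, mem_univ, true_and] at hp
        obtain ⟨h1, h2⟩ := hp
        refine ⟨(j, i), ?_, rfl⟩
        simp only [hP, mem_filter, mem_univ, true_and]
        exact ⟨⟨by rw [hsym]; exact h1, ne_of_gt h2⟩, not_lt.mpr (le_of_lt h2)⟩
    rw [e1] at h2
    omega
  have hocc : occ A ℓ = P.card := rfl
  omega



lemma eq_last_of_not_lt {r : ℕ} {v : Fin (r+1)} (h : ¬ v.val < r) : v = Fin.last r :=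
  Fin.ext (by have := v.isLt; simp only [Fin.val_last]; omega)

lemma occ_succ {n r : ℕ} (L' : Fin (r+1) → Fin (r+1) → Fin n) (ℓ : Fin n) :
    occ L' ℓ = occ (fun i j : Fin r => L' i.castSucc j.castSucc) ℓ
      + (univ.filter fun i : Fin r => L' i.castSucc (Fin.last r) = ℓ).card
      + (univ.filter fun j : Fin r => L' (Fin.last r) j.castSucc = ℓ).card
      + (if L' (Fin.last r) (Fin.last r) = ℓ then 1 else 0) := by
  classical
  set P := univ.filter fun p : Fin (r+1) × Fin (r+1) => L' p.1 p.2 = ℓ with hPdef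
  have hs1 := Finset.card_filter_add_card_filter_not
    (s := P) (p := fun p => p.1.val < r)
  have hs2 := Finset.card_filter_add_card_filter_not
    (s := P.filter fun p => p.1.val < r) (p := fun p => p.2.val < r)
  have hs3 := Finset.card_filter_add_card_filter_not
    (s := P.filter fun p => ¬ p.1.val < r) (p := fun p => p.2.val < r)
  have c11 : ((P.filter fun p => p.1.val < r).filter fun p => p.2.val < r).card
      = occ (fun i j : Fin r => L' i.castSucc j.castSucc) ℓ := by
    symm
    apply Finset.card_bij (fun q (_ : q ∈ univ.filter fun q : Fin r × Fin r =>
      L' q.1.castSucc q.2.castSucc = ℓ) => ((q.1.castSucc : Fin (r+1)), (q.2.castSucc : Fin (r+1))))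
    · rintro ⟨i, j⟩ hq
      simp only [hPdef, mem_filter, mem_univ, true_and] at hq ⊢
      exact ⟨⟨hq, i.isLt⟩, j.isLt⟩
    · rintro ⟨i, j⟩ _ ⟨i', j'⟩ _ h
      simp only [Prod.mk.injEq] at h
      simp [Prod.ext_iff, Fin.castSucc_injective _ h.1, Fin.castSucc_injective _ h.2]
    · rintro ⟨u, v⟩ hp
      simp only [hPdef, mem_filter, mem_univ, true_and] at hp
      obtain ⟨⟨h1, h2⟩, h3⟩ := hp
      refine ⟨(⟨u.val, h2⟩, ⟨v.val, h3⟩), ?_, ?_⟩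
      · simp only [mem_filter, mem_univ, true_and]
        have hu : (⟨u.val, h2⟩ : Fin r).castSucc = u := Fin.ext rfl
        have hv : (⟨v.val, h3⟩ : Fin r).castSucc = v := Fin.ext rfl
        rw [hu, hv]; exact h1
      · simp only [Prod.mk.injEq]
        exact ⟨Fin.ext rfl, Fin.ext rfl⟩
  have c10 : ((P.filter fun p => p.1.val < r).filter fun p => ¬ p.2.val < r).card
      = (univ.filter fun i : Fin r => L' i.castSucc (Fin.last r) = ℓ).card := by
    symm
    apply Finset.card_bij (fun i (_ : i ∈ univ.filter fun i : Fin r =>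
      L' i.castSucc (Fin.last r) = ℓ) => ((i.castSucc : Fin (r+1)), Fin.last r))
    · rintro i hi
      simp only [hPdef, mem_filter, mem_univ, true_and] at hi ⊢
      exact ⟨⟨hi, i.isLt⟩, by simp⟩
    · rintro i _ i' _ h
      simp only [Prod.mk.injEq] at h
      exact Fin.castSucc_injective _ h.1
    · rintro ⟨u, v⟩ hp
      simp only [hPdef, mem_filter, mem_univ, true_and] at hp
      obtain ⟨⟨h1, h2⟩, h3⟩ := hp
      have hv : v = Fin.last r := eq_last_of_not_lt h3
      refine ⟨⟨u.val, h2⟩, ?_, ?_⟩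
      · simp only [mem_filter, mem_univ, true_and]
        have hu : (⟨u.val, h2⟩ : Fin r).castSucc = u := Fin.ext rfl
        rw [hu, ← hv]; exact h1
      · simp only [Prod.mk.injEq]
        exact ⟨Fin.ext rfl, hv.symm⟩
  have c01 : ((P.filter fun p => ¬ p.1.val < r).filter fun p => p.2.val < r).card
      = (univ.filter fun j : Fin r => L' (Fin.last r) j.castSucc = ℓ).card := by
    symm
    apply Finset.card_bij (fun j (_ : j ∈ univ.filter fun j : Fin r =>
      L' (Fin.last r) j.castSucc = ℓ) => ((Fin.last r : Fin (r+1)), (j.castSucc : Fin (r+1))))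
    · rintro j hj
      simp only [hPdef, mem_filter, mem_univ, true_and] at hj ⊢
      exact ⟨⟨hj, by simp⟩, j.isLt⟩
    · rintro j _ j' _ h
      simp only [Prod.mk.injEq] at h
      exact Fin.castSucc_injective _ h.2
    · rintro ⟨u, v⟩ hp
      simp only [hPdef, mem_filter, mem_univ, true_and] at hp
      obtain ⟨⟨h1, h2⟩, h3⟩ := hp
      have hu : u = Fin.last r := eq_last_of_not_lt h2
      refine ⟨⟨v.val, h3⟩, ?_, ?_⟩
      · simp only [mem_filter, mem_univ, true_and]
        have hv : (⟨v.val, h3⟩ : Fin r).castSucc = v := Fin.ext rfl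
        rw [hv, ← hu]; exact h1
      · simp only [Prod.mk.injEq]
        exact ⟨hu.symm, Fin.ext rfl⟩
  have c00 : ((P.filter fun p => ¬ p.1.val < r).filter fun p => ¬ p.2.val < r).card
      = (if L' (Fin.last r) (Fin.last r) = ℓ then 1 else 0) := by
    by_cases h : L' (Fin.last r) (Fin.last r) = ℓ
    · rw [if_pos h]
      have : ((P.filter fun p => ¬ p.1.val < r).filter fun p => ¬ p.2.val < r)
          = {((Fin.last r : Fin (r+1)), (Fin.last r : Fin (r+1)))} := by
        ext ⟨u, v⟩
        simp only [hPdef, mem_filter, mem_univ, true_and, mem_singleton, Prod.mk.injEq]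
        constructor
        · rintro ⟨⟨-, h2⟩, h3⟩
          exact ⟨eq_last_of_not_lt h2, eq_last_of_not_lt h3⟩
        · rintro ⟨rfl, rfl⟩
          exact ⟨⟨h, by simp⟩, by simp⟩
      rw [this]; simp
    · rw [if_neg h]
      rw [Finset.card_eq_zero]
      ext ⟨u, v⟩
      simp only [hPdef, mem_filter, mem_univ, true_and, Finset.notMem_empty, iff_false, not_and]
      rintro ⟨h1, h2⟩ h3
      rw [eq_last_of_not_lt h2, eq_last_of_not_lt h3] at h1
      exact h h1
  have hocc : occ L' ℓ = P.card := rfl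
  omega



lemma sum_occ' {n r : ℕ} (L : Fin r → Fin r → Fin n) : ∑ ℓ : Fin n, occ L ℓ = r * r := by
  classical
  have := Finset.card_eq_sum_card_fiberwise
    (s := (univ : Finset (Fin r × Fin r))) (t := (univ : Finset (Fin n)))
    (f := fun p => L p.1 p.2) (fun x _ => mem_univ _)
  simp only [occ]
  rw [← this]
  simp [Fintype.card_prod]

lemma S_card_parity {n r : ℕ} (L : Fin r → Fin r → Fin n) :
    (univ.filter fun ℓ : Fin n => occ L ℓ % 2 = n % 2).card % 2 = r % 2 := by
  classical
  have zsq : ∀ x : ZMod 2, x * x = x := by decide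
  have zadd : ∀ x y : ZMod 2, x + y + x = y := by decide
  have zadd1 : ∀ x : ZMod 2, 1 = 1 + x + x := by decide
  have zne : ∀ a b : ZMod 2, a ≠ b → a + b = 1 := by decide
  rw [← Nat.ModEq, ← ZMod.natCast_eq_natCast_iff]
  have key : ∀ ℓ : Fin n, ((if occ L ℓ % 2 = n % 2 then 1 else 0 : ℕ) : ZMod 2)
      = 1 + (occ L ℓ : ZMod 2) + (n : ZMod 2) := by
    intro ℓ
    have hiff : occ L ℓ % 2 = n % 2 ↔ ((occ L ℓ : ℕ) : ZMod 2) = ((n : ℕ) : ZMod 2) := by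
      rw [ZMod.natCast_eq_natCast_iff]; exact Iff.rfl
    by_cases h : occ L ℓ % 2 = n % 2
    · rw [if_pos h, hiff.mp h]
      push_cast
      exact zadd1 _
    · rw [if_neg h]
      have : (occ L ℓ : ZMod 2) + (n : ZMod 2) = 1 := zne _ _ (fun he => h (hiff.mpr he))
      rw [add_assoc, this]
      decide
  have hcard : ((univ.filter fun ℓ : Fin n => occ L ℓ % 2 = n % 2).card : ZMod 2)
      = ∑ ℓ : Fin n, ((if occ L ℓ % 2 = n % 2 then 1 else 0 : ℕ) : ZMod 2) := by
    rw [Finset.card_filter]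
    push_cast
    rfl
  rw [hcard]
  calc ∑ ℓ : Fin n, ((if occ L ℓ % 2 = n % 2 then 1 else 0 : ℕ) : ZMod 2)
      = ∑ ℓ : Fin n, (1 + (occ L ℓ : ZMod 2) + (n : ZMod 2)) :=
        Finset.sum_congr rfl fun ℓ _ => key ℓ
    _ = (n : ZMod 2) * 1 + (∑ ℓ : Fin n, (occ L ℓ : ZMod 2)) + (n : ZMod 2) * (n : ZMod 2) := by
        rw [Finset.sum_add_distrib, Finset.sum_add_distrib]
        simp only [Finset.sum_const, Finset.card_univ, Fintype.card_fin, nsmul_eq_mul,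
          smul_eq_mul]
    _ = (r : ZMod 2) := by
        have hs : (∑ ℓ : Fin n, (occ L ℓ : ZMod 2)) = ((r * r : ℕ) : ZMod 2) := by
          rw [← Nat.cast_sum, sum_occ']
        rw [hs, zsq, mul_one]
        push_cast
        rw [zsq]
        exact zadd _ _



lemma arith1 (r n y b z so sc soc w w' od : ℤ)
    (e1 : sc + so = z * r) (e2 : sc ≤ b * (n - r)) (e3 : so + soc = r * r)
    (e4 : w' * (2 * r) + (od + n) ≤ soc + w * n) (e5 : w' + 1 = w) (e6 : w + z = n)
    (e7 : z + 1 = y) (e8 : b + (n - r) + 1 ≤ y) (e9 : 2 * r + 1 ≤ od + n)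
    (hnr : 0 ≤ n - r) : False := by
  have hw' : w' = w - 1 := by linarith
  have hw : w = n - z := by linarith
  have hb : b ≤ z - (n - r) := by linarith
  have k2 : b * (n - r) ≤ (z - (n - r)) * (n - r) :=
    mul_le_mul_of_nonneg_right hb hnr
  subst hw'
  subst hw
  nlinarith [e1, e2, e3, e4, k2]

lemma arith2 (r n y b so sc soc w : ℤ)
    (e1 : sc + so = y * r) (e2 : sc ≤ b * (n - r)) (e3 : so + soc = r * r)
    (e4 : w * (2 * r) ≤ soc + w * n) (e6 : w + y = n)
    (e8 : b + (n - r) + 1 ≤ y)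
    (hnr : 0 ≤ n - r) (hm1 : 1 ≤ n - r) : False := by
  have hw : w = n - y := by linarith
  have hb : b ≤ y - (n - r) - 1 := by linarith
  have k2 : b * (n - r) ≤ (y - (n - r) - 1) * (n - r) :=
    mul_le_mul_of_nonneg_right hb hnr
  subst hw
  nlinarith [e1, e2, e3, e4, k2]

section Hall
variable {n r : ℕ} {L : Fin r → Fin r → Fin n}

/-- The Hall condition for the auxiliary bipartite graph. -/
lemma hall_cond (hrn : r < n)
    (hcol : ∀ j, Function.Injective fun i => L i j)
    (h1 : ∀ ℓ, 2 * r ≤ occ L ℓ + n)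
    (d : Fin n) (F' : Finset (Fin n))
    (hdP1 : occ L d + n ≠ 2 * r)
    (hdF' : d ∉ F')
    (hF'lo : ∀ ℓ ∈ F', occ L ℓ + n = 2 * r ∨ occ L ℓ + n = 2 * r + 1)
    (hF'hi : (F'.filter fun ℓ => occ L ℓ + n = 2 * r + 1).card + r + 1 ≤ n)
    (Y : Finset (Fin n)) :
    Y.card ≤ (Y.biUnion fun ℓ => univ.filter fun v : Fin n =>
      if h : v.val < r then (ℓ ≠ d ∧ ∀ i, L i (⟨v.val, h⟩ : Fin r) ≠ ℓ) else ℓ ∉ F').card := by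
  classical
  set t : Fin n → Finset (Fin n) := fun ℓ => univ.filter fun v : Fin n =>
      if h : v.val < r then (ℓ ≠ d ∧ ∀ i, L i (⟨v.val, h⟩ : Fin r) ≠ ℓ) else ℓ ∉ F' with ht
  set colsOf' : Fin n → Finset (Fin r) := fun ℓ =>
      univ.filter fun j : Fin r => ℓ ≠ d ∧ ∀ i, L i j ≠ ℓ with hcolsOf'
  set B := Y.biUnion colsOf' with hB
  -- the image of B in Fin n is inside the biUnion
  have hsub1 : B.image (Fin.castLE hrn.le) ⊆ Y.biUnion t := by
    intro v hv
    simp only [hB, mem_image, mem_biUnion] at hv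
    obtain ⟨j, hj, rfl⟩ := hv
    simp only [mem_biUnion] at hj ⊢
    obtain ⟨ℓ, hℓY, hℓj⟩ := hj
    refine ⟨ℓ, hℓY, ?_⟩
    simp only [hcolsOf', mem_filter, mem_univ, true_and] at hℓj
    simp only [ht, mem_filter, mem_univ, true_and]
    rw [dif_pos (show (Fin.castLE hrn.le j).val < r from j.isLt)]
    have : (⟨(Fin.castLE hrn.le j).val, j.isLt⟩ : Fin r) = j := Fin.ext rfl
    rw [this]
    exact hℓj
  have himgcard : (B.image (Fin.castLE hrn.le)).card = B.card :=
    Finset.card_image_of_injective _ (Fin.castLE_injective hrn.le)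
  -- per-column degree bound
  have hdeg : ∀ (W : Finset (Fin n)) (j : Fin r),
      (W.filter fun ℓ => j ∈ colsOf' ℓ).card ≤ n - r := by
    intro W j
    have hsub : (W.filter fun ℓ => j ∈ colsOf' ℓ)
        ⊆ univ.filter fun ℓ : Fin n => ∀ i, L i j ≠ ℓ := by
      intro ℓ hℓ
      simp only [hcolsOf', mem_filter, mem_univ, true_and] at hℓ ⊢
      exact hℓ.2.2
    have := Finset.card_le_card hsub
    have h2 := card_compat_col hcol j
    omega
  by_cases hYF : ∀ ℓ ∈ Y, ℓ ∈ F'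
  · -- Case A : Y ⊆ F'
    have hdY : d ∉ Y := fun hd => hdF' (hYF d hd)
    -- lower bound on degrees
    have hlow : ∀ ℓ ∈ Y, n - r ≤ (colsOf' ℓ).card + (if occ L ℓ + n = 2*r + 1 then 1 else 0) := by
      intro ℓ hℓ
      have hne : ℓ ≠ d := fun h => hdY (h ▸ hℓ)
      have hc : (colsOf' ℓ).card = (univ.filter fun j : Fin r => ∀ i, L i j ≠ ℓ).card := by
        simp only [hcolsOf']
        congr 1
        ext j
        simp only [mem_filter, mem_univ, true_and]
        exact ⟨fun h => h.2, fun h => ⟨hne, h⟩⟩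
      have hcs := card_compat_sym hcol ℓ
      rcases hF'lo ℓ (hYF ℓ hℓ) with h | h
      · rw [if_neg (by omega)]; omega
      · rw [if_pos h]; omega
    have hsum1 : Y.card * (n - r) ≤ (∑ ℓ ∈ Y, (colsOf' ℓ).card)
        + (Y.filter fun ℓ => occ L ℓ + n = 2*r+1).card := by
      calc Y.card * (n - r) = ∑ _ℓ ∈ Y, (n - r) := by rw [Finset.sum_const, smul_eq_mul]
        _ ≤ ∑ ℓ ∈ Y, ((colsOf' ℓ).card + (if occ L ℓ + n = 2*r + 1 then 1 else 0)) :=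
            Finset.sum_le_sum hlow
        _ = (∑ ℓ ∈ Y, (colsOf' ℓ).card) + (Y.filter fun ℓ => occ L ℓ + n = 2*r+1).card := by
            rw [Finset.sum_add_distrib, Finset.card_filter]
    have hsum2 : ∑ ℓ ∈ Y, (colsOf' ℓ).card ≤ B.card * (n - r) :=
      sum_card_le_biUnion_mul Y colsOf' (n - r) (fun j => hdeg Y j)
    have hfsub : (Y.filter fun ℓ => occ L ℓ + n = 2*r+1).card
        ≤ (F'.filter fun ℓ => occ L ℓ + n = 2 * r + 1).card := by
      apply Finset.card_le_card
      intro ℓ hℓ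
      simp only [mem_filter] at hℓ ⊢
      exact ⟨hYF ℓ hℓ.1, hℓ.2⟩
    -- conclude Y.card ≤ B.card
    have hYB : Y.card ≤ B.card := by
      by_contra hno
      push_neg at hno
      have hmul : (B.card + 1) * (n - r) ≤ Y.card * (n - r) :=
        Nat.mul_le_mul_right _ (by omega)
      rw [Nat.succ_mul] at hmul
      omega
    calc Y.card ≤ B.card := hYB
      _ = (B.image (Fin.castLE hrn.le)).card := himgcard.symm
      _ ≤ (Y.biUnion t).card := Finset.card_le_card hsub1
  · -- Case B : some element of Y is not in F'
    push_neg at hYF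
    obtain ⟨ℓ₀, hℓ₀Y, hℓ₀F⟩ := hYF
    have hsub2 : (univ.filter fun v : Fin n => ¬ v.val < r) ⊆ Y.biUnion t := by
      intro v hv
      simp only [mem_filter, mem_univ, true_and] at hv
      simp only [mem_biUnion]
      refine ⟨ℓ₀, hℓ₀Y, ?_⟩
      simp only [ht, mem_filter, mem_univ, true_and]
      rw [dif_neg hv]
      exact hℓ₀F
    have htailcard : (univ.filter fun v : Fin n => ¬ v.val < r).card + r = n := by
      have hh := card_head (n := n) (r := r) hrn.le
      have := Finset.card_filter_add_card_filter_not
        (s := (univ : Finset (Fin n))) (p := fun v : Fin n => v.val < r)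
      simp only [card_univ, Fintype.card_fin] at this
      omega
    have hdisj : Disjoint (B.image (Fin.castLE hrn.le))
        (univ.filter fun v : Fin n => ¬ v.val < r) := by
      rw [Finset.disjoint_left]
      intro v hv hv'
      simp only [mem_image] at hv
      obtain ⟨j, -, rfl⟩ := hv
      simp only [mem_filter, mem_univ, true_and] at hv'
      exact hv' j.isLt
    have hcard_union : B.card + (n - r) ≤ (Y.biUnion t).card := by
      have := Finset.card_le_card (Finset.union_subset hsub1 hsub2)
      rw [Finset.card_union_of_disjoint hdisj, himgcard] at this
      omega
    -- now show Y.card ≤ B.card + (n - r)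
    have hmain : Y.card ≤ B.card + (n - r) := by
      by_cases hsmall : Y.card ≤ n - r
      · omega
      by_cases h2r : 2 * r < n
      · -- very wide case : every column is a neighbour
        have hBall : B = univ := by
          apply Finset.eq_univ_of_forall
          intro j
          have hYbig : r < (Y.erase d).card := by
            by_cases hdY : d ∈ Y
            · have := Finset.card_erase_of_mem hdY; omega
            · rw [Finset.erase_eq_of_notMem hdY]; omega
          have hex : ∃ ℓ ∈ Y.erase d, ∀ i, L i j ≠ ℓ := by
            by_contra hno
            push_neg at hno
            have hsub : Y.erase d ⊆ univ.image (fun i => L i j) := by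
              intro ℓ hℓ
              obtain ⟨i, hi⟩ := hno ℓ hℓ
              simp only [mem_image]
              exact ⟨i, mem_univ _, hi⟩
            have := Finset.card_le_card hsub
            have himg : (univ.image (fun i => L i j)).card ≤ r := by
              calc (univ.image (fun i => L i j)).card ≤ (univ : Finset (Fin r)).card :=
                Finset.card_image_le
              _ = r := by simp
            omega
          obtain ⟨ℓ, hℓ, hcomp⟩ := hex
          simp only [hB, mem_biUnion]
          refine ⟨ℓ, Finset.mem_of_mem_erase hℓ, ?_⟩
          simp only [hcolsOf', mem_filter, mem_univ, true_and]
          exact ⟨Finset.ne_of_mem_erase hℓ, hcomp⟩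
        have hYn : Y.card ≤ n := by
          calc Y.card ≤ (univ : Finset (Fin n)).card := Finset.card_le_univ Y
            _ = n := by simp
        rw [hBall]
        simp only [card_univ, Fintype.card_fin]
        omega
      · -- main counting case, 2r ≥ n
        push_neg at h2r
        by_contra hno
        push_neg at hno
        set Z := Y.erase d with hZ
        have hZY : Z ⊆ Y := Finset.erase_subset d Y
        have hZd : d ∉ Z := Finset.notMem_erase d Y
        -- degrees sum over Z
        have hcongr : ∀ ℓ ∈ Z, (colsOf' ℓ).card
            = (univ.filter fun j : Fin r => ∀ i, L i j ≠ ℓ).card := by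
          intro ℓ hℓ
          simp only [hcolsOf']
          congr 1
          ext j
          simp only [mem_filter, mem_univ, true_and]
          exact ⟨fun h => h.2, fun h => ⟨Finset.ne_of_mem_erase hℓ, h⟩⟩
        have hsumZ : ∑ ℓ ∈ Z, ((colsOf' ℓ).card + occ L ℓ) = Z.card * r := by
          rw [Finset.sum_congr rfl (fun ℓ hℓ => by
            rw [hcongr ℓ hℓ, card_compat_sym hcol ℓ])]
          rw [Finset.sum_const, smul_eq_mul]
        have hsum2 : ∑ ℓ ∈ Z, (colsOf' ℓ).card ≤ B.card * (n - r) := by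
          calc ∑ ℓ ∈ Z, (colsOf' ℓ).card
              ≤ (Z.biUnion colsOf').card * (n - r) :=
                sum_card_le_biUnion_mul Z colsOf' (n - r) (fun j => hdeg Z j)
            _ ≤ B.card * (n - r) := by
                apply Nat.mul_le_mul_right
                apply Finset.card_le_card
                exact Finset.biUnion_subset_biUnion_of_subset_left _ hZY
        -- sum of occ over complement
        have hsplit : ∑ ℓ ∈ Z, occ L ℓ + ∑ ℓ ∈ univ \ Z, occ L ℓ = r * r := by
          rw [add_comm, Finset.sum_sdiff (Finset.subset_univ Z), sum_occ']
        have hcompl_card : (univ \ Z).card + Z.card = n := by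
          rw [Finset.card_sdiff_of_subset (Finset.subset_univ Z)]
          have := Finset.card_le_univ Z
          simp only [card_univ, Fintype.card_fin] at *
          omega
        have hlower : ∀ W : Finset (Fin n), W.card * (2 * r) ≤ ∑ ℓ ∈ W, (occ L ℓ + n) := by
          intro W
          calc W.card * (2 * r) = ∑ _ℓ ∈ W, 2 * r := by rw [Finset.sum_const, smul_eq_mul]
            _ ≤ ∑ ℓ ∈ W, (occ L ℓ + n) := Finset.sum_le_sum fun ℓ _ => h1 ℓ
        have hYcn : Y.card ≤ n := by
          calc Y.card ≤ (univ : Finset (Fin n)).card := Finset.card_le_univ Y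
            _ = n := by simp
        by_cases hdY : d ∈ Y
        · -- d ∈ Y
          have hZcard : Z.card + 1 = Y.card := by
            rw [hZ, Finset.card_erase_of_mem hdY]; omega
          have hdcompl : d ∈ univ \ Z := by
            simp only [mem_sdiff, mem_univ, true_and]; exact hZd
          have hsum_compl : ((univ \ Z).erase d).card * (2 * r) + (occ L d + n)
              ≤ ∑ ℓ ∈ univ \ Z, (occ L ℓ + n) := by
            have := hlower ((univ \ Z).erase d)
            have heq : ∑ ℓ ∈ (univ \ Z).erase d, (occ L ℓ + n) + (occ L d + n)
                = ∑ ℓ ∈ univ \ Z, (occ L ℓ + n) :=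
              Finset.sum_erase_add _ _ hdcompl
            omega
          have herase_card : ((univ \ Z).erase d).card + 1 = (univ \ Z).card := by
            rw [Finset.card_erase_of_mem hdcompl]
            have : 0 < (univ \ Z).card := Finset.card_pos.mpr ⟨d, hdcompl⟩
            omega
          have hdlow : 2 * r + 1 ≤ occ L d + n := by have := h1 d; omega
          rw [Finset.sum_add_distrib, Finset.sum_const, smul_eq_mul] at hsum_compl
          rw [Finset.sum_add_distrib] at hsumZ
          set y := Y.card with hy; clear_value y
          set b := B.card with hb; clear_value b
          set z := Z.card with hz; clear_value z
          set so := ∑ ℓ ∈ Z, occ L ℓ with hso; clear_value so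
          set sc := ∑ ℓ ∈ Z, (colsOf' ℓ).card with hsc; clear_value sc
          set soc := ∑ ℓ ∈ univ \ Z, occ L ℓ with hsoc; clear_value soc
          set w := (univ \ Z).card with hw; clear_value w
          set w' := ((univ \ Z).erase d).card with hw'; clear_value w'
          set od := occ L d with hod; clear_value od
          have hnrZ : ((n - r : ℕ) : ℤ) = (n : ℤ) - (r : ℤ) := by omega
          refine arith1 (r : ℤ) n y b z so sc soc w w' od ?_ ?_ ?_ ?_ ?_ ?_ ?_ ?_ ?_ ?_
          · exact_mod_cast hsumZ
          · rw [← hnrZ]; exact_mod_cast hsum2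
          · exact_mod_cast hsplit
          · exact_mod_cast hsum_compl
          · exact_mod_cast herase_card
          · exact_mod_cast hcompl_card
          · exact_mod_cast hZcard
          · rw [← hnrZ]
            have : b + (n - r) + 1 ≤ y := hno
            exact_mod_cast this
          · exact_mod_cast hdlow
          · omega
        · -- d ∉ Y
          have hZY' : Z = Y := Finset.erase_eq_of_notMem hdY
          have hsum_compl : (univ \ Z).card * (2 * r) ≤ ∑ ℓ ∈ univ \ Z, (occ L ℓ + n) :=
            hlower _
          rw [Finset.sum_add_distrib, Finset.sum_const, smul_eq_mul] at hsum_compl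
          rw [Finset.sum_add_distrib] at hsumZ
          rw [hZY'] at hsumZ hcompl_card hsum2 hsum_compl hsplit
          set y := Y.card with hy; clear_value y
          set b := B.card with hb; clear_value b
          set so := ∑ ℓ ∈ Y, occ L ℓ with hso; clear_value so
          set sc := ∑ ℓ ∈ Y, (colsOf' ℓ).card with hsc; clear_value sc
          set soc := ∑ ℓ ∈ univ \ Y, occ L ℓ with hsoc; clear_value soc
          set w := (univ \ Y).card with hw; clear_value w
          have hnrZ : ((n - r : ℕ) : ℤ) = (n : ℤ) - (r : ℤ) := by omega
          have hm1 : (1 : ℤ) ≤ (n : ℤ) - r := by omega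
          refine arith2 (r : ℤ) n y b so sc soc w ?_ ?_ ?_ ?_ ?_ ?_ ?_ hm1
          · exact_mod_cast hsumZ
          · rw [← hnrZ]; exact_mod_cast hsum2
          · exact_mod_cast hsplit
          · exact_mod_cast hsum_compl
          · exact_mod_cast hcompl_card
          · rw [← hnrZ]
            have : b + (n - r) + 1 ≤ y := hno
            exact_mod_cast this
          · omega
    omega
end Hall


lemma necessity {n r : ℕ} (hrn : r ≤ n) (L : Fin r → Fin r → Fin n)
    (hL : IsSymLatinRect L) (A : Fin n → Fin n → Fin n) (hA : IsSymLS A)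
    (hE : Extends hrn L A) :
    (∀ ℓ, 2 * r ≤ occ L ℓ + n) ∧
      r ≤ (Finset.univ.filter fun ℓ : Fin n => occ L ℓ % 2 = n % 2).card := by
  classical
  obtain ⟨hArow, hAcol, hAsym⟩ := hA
  obtain ⟨hLrow, hLcol, hLsym⟩ := hL
  constructor
  · -- condition (i)
    intro ℓ
    have hrows := occ_eq_card_rows hLrow ℓ
    have hsplit := Finset.card_filter_add_card_filter_not
      (s := (univ : Finset (Fin r))) (p := fun i => ∃ j, L i j = ℓ)
    -- injection from bad rows into tail columns
    set f : Fin r → Fin n := fun i => (Equiv.ofBijective _ (hArow (Fin.castLE hrn i))).symm ℓ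
      with hf
    have hfval : ∀ i, A (Fin.castLE hrn i) (f i) = ℓ := by
      intro i
      exact (Equiv.ofBijective _ (hArow (Fin.castLE hrn i))).apply_symm_apply ℓ
    have hmaps : ∀ i ∈ (univ.filter fun i : Fin r => ¬ ∃ j, L i j = ℓ),
        f i ∈ (univ.filter fun v : Fin n => r ≤ v.val) := by
      intro i hi
      simp only [mem_filter, mem_univ, true_and] at hi ⊢
      by_contra hlt
      push_neg at hlt
      have hcast : Fin.castLE hrn (⟨(f i).val, hlt⟩ : Fin r) = f i := Fin.ext rfl
      exact hi ⟨⟨(f i).val, hlt⟩, by rw [← hE, hcast, hfval]⟩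
    have hinj : Set.InjOn f (univ.filter fun i : Fin r => ¬ ∃ j, L i j = ℓ) := by
      intro i1 _ i2 _ h
      have h1 := hfval i1
      have h2 := hfval i2
      rw [h] at h1
      have heqA : A (Fin.castLE hrn i1) (f i2) = A (Fin.castLE hrn i2) (f i2) := by
        rw [h1, h2]
      have := (hAcol (f i2)).injective heqA
      exact Fin.castLE_injective hrn this
    have hle := Finset.card_le_card_of_injOn f hmaps hinj
    have htail := card_tail (n := n) (r := r) hrn
    simp only [card_univ, Fintype.card_fin] at hsplit
    omega
  · -- condition (ii)
    have key : ∀ ℓ : Fin n, ¬ (occ L ℓ % 2 = n % 2) →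
        ∃ v : Fin n, r ≤ v.val ∧ A v v = ℓ := by
      intro ℓ hT
      have occA : occ A ℓ = n := by
        rw [occ_eq_card_rows (fun i => (hArow i).injective) ℓ]
        have : (univ.filter fun i : Fin n => ∃ j, A i j = ℓ) = univ := by
          apply Finset.filter_true_of_mem
          intro i _
          exact (hArow i).surjective ℓ
        rw [this]; simp
      have hpA := occ_parity A hAsym ℓ
      have hpL := occ_parity L hLsym ℓ
      set D := univ.filter fun v : Fin n => A v v = ℓ with hD
      have hsplit := Finset.card_filter_add_card_filter_not
        (s := D) (p := fun v => v.val < r)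
      have hhead : (D.filter fun v => v.val < r).card
          = (univ.filter fun i : Fin r => L i i = ℓ).card := by
        symm
        apply Finset.card_bij (fun i (_ : i ∈ univ.filter fun i : Fin r => L i i = ℓ)
          => Fin.castLE hrn i)
        · intro i hi
          simp only [mem_filter, mem_univ, true_and] at hi
          simp only [hD, mem_filter, mem_univ, true_and]
          exact ⟨by rw [hE]; exact hi, i.isLt⟩
        · intro i _ i' _ h
          exact Fin.castLE_injective hrn h
        · intro v hv
          simp only [hD, mem_filter, mem_univ, true_and] at hv
          obtain ⟨h1, h2⟩ := hv
          refine ⟨⟨v.val, h2⟩, ?_, Fin.ext rfl⟩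
          simp only [mem_filter, mem_univ, true_and]
          have hc : Fin.castLE hrn (⟨v.val, h2⟩ : Fin r) = v := Fin.ext rfl
          rw [← hE, hc]
          exact h1
      have hne : (D.filter fun v => ¬ v.val < r).card ≠ 0 := by omega
      obtain ⟨v, hv⟩ := Finset.card_ne_zero.mp hne |>.exists_mem
      simp only [hD, mem_filter, mem_univ, true_and] at hv
      obtain ⟨hv1, hv2⟩ := hv
      exact ⟨v, by omega, hv1⟩
    have hcT : (univ.filter fun ℓ : Fin n => ¬ (occ L ℓ % 2 = n % 2)).card
        ≤ (univ.filter fun v : Fin n => r ≤ v.val).card := by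
      set g : Fin n → Fin n := fun ℓ =>
        if h : ∃ v : Fin n, r ≤ v.val ∧ A v v = ℓ then h.choose else ℓ
      apply Finset.card_le_card_of_injOn g
      · intro ℓ hℓ
        simp only [Finset.mem_coe, mem_filter, mem_univ, true_and] at hℓ
        have hex := key ℓ hℓ
        simp only [g, dif_pos hex, Finset.mem_coe, mem_filter, mem_univ, true_and]
        exact hex.choose_spec.1
      · intro ℓ1 h1 ℓ2 h2 heq
        simp only [Finset.coe_filter, Set.mem_setOf_eq, mem_univ, true_and] at h1 h2
        have hex1 := key ℓ1 h1
        have hex2 := key ℓ2 h2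
        simp only [g, dif_pos hex1, dif_pos hex2] at heq
        have e1 := hex1.choose_spec.2
        have e2 := hex2.choose_spec.2
        rw [heq] at e1
        rw [e1] at e2
        exact e2
    have htail := card_tail (n := n) (r := r) hrn
    have hsplit := Finset.card_filter_add_card_filter_not
      (s := (univ : Finset (Fin n))) (p := fun ℓ => occ L ℓ % 2 = n % 2)
    simp only [card_univ, Fintype.card_fin] at hsplit
    omega


lemma extend_step {n r : ℕ} (hrn : r < n) (L : Fin r → Fin r → Fin n)
    (hL : IsSymLatinRect L)
    (h1 : ∀ ℓ, 2 * r ≤ occ L ℓ + n)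
    (h2 : r ≤ (univ.filter fun ℓ : Fin n => occ L ℓ % 2 = n % 2).card) :
    ∃ L' : Fin (r+1) → Fin (r+1) → Fin n,
      IsSymLatinRect L' ∧ (∀ i j : Fin r, L' i.castSucc j.castSucc = L i j) ∧
      (∀ ℓ, 2 * (r+1) ≤ occ L' ℓ + n) ∧
      (r+1) ≤ (univ.filter fun ℓ : Fin n => occ L' ℓ % 2 = n % 2).card := by
  classical
  obtain ⟨hLrow, hLcol, hLsym⟩ := hL
  set F₁ := univ.filter fun ℓ : Fin n => occ L ℓ + n = 2*r + 1 with hF₁def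
  set S := univ.filter fun ℓ : Fin n => occ L ℓ % 2 = n % 2 with hSdef
  -- Step 1 : choose the diagonal symbol d
  have hF₁S : ∀ ℓ ∈ F₁, ℓ ∉ S := by
    intro ℓ hℓ hS
    simp only [hF₁def, mem_filter, mem_univ, true_and] at hℓ
    simp only [hSdef, mem_filter, mem_univ, true_and] at hS
    omega
  have hF₁cardS : F₁.card + S.card ≤ n := by
    have hdisj : Disjoint F₁ S := Finset.disjoint_left.mpr hF₁S
    calc F₁.card + S.card = (F₁ ∪ S).card := (Finset.card_union_of_disjoint hdisj).symm
      _ ≤ (univ : Finset (Fin n)).card := Finset.card_le_univ _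
      _ = n := by simp
  have hdex : ∃ d : Fin n, (occ L d + n ≠ 2*r) ∧ ((F₁.erase d).card + r + 1 ≤ n) ∧
      (S.card ≤ r+1 → ¬ (occ L d % 2 = n % 2)) := by
    by_cases hb : n ≤ F₁.card + r
    · have hne : F₁.Nonempty := Finset.card_pos.mp (by omega)
      obtain ⟨d, hd⟩ := hne
      have hd1 : occ L d + n = 2*r+1 := (Finset.mem_filter.mp hd).2
      refine ⟨d, by omega, ?_, fun _ => by omega⟩
      rw [Finset.card_erase_of_mem hd]
      omega
    · push_neg at hb
      have herase_le : ∀ d : Fin n, (F₁.erase d).card ≤ F₁.card :=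
        fun d => Finset.card_le_card (Finset.erase_subset _ _)
      by_cases hs : S.card ≤ r + 1
      · have hSr : S.card % 2 = r % 2 := S_card_parity L
        have hSeq : S.card = r := by omega
        have hScompl : (univ \ S).Nonempty := by
          rw [← Finset.card_pos, Finset.card_sdiff_of_subset (Finset.subset_univ S)]
          simp only [card_univ, Fintype.card_fin]
          omega
        obtain ⟨d, hd⟩ := hScompl
        have hdS : d ∉ S := (Finset.mem_sdiff.mp hd).2
        have hdpar : ¬ (occ L d % 2 = n % 2) := fun h =>
          hdS (Finset.mem_filter.mpr ⟨mem_univ _, h⟩)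
        refine ⟨d, fun h => hdpar (by omega), by have := herase_le d; omega, fun _ => hdpar⟩
      · push_neg at hs
        have hex : ∃ d : Fin n, occ L d + n ≠ 2*r := by
          by_contra hall
          push_neg at hall
          have hsum1 : ∑ ℓ : Fin n, (occ L ℓ + n) = n * (2*r) := by
            rw [Finset.sum_congr rfl fun ℓ _ => hall ℓ]
            rw [Finset.sum_const, smul_eq_mul, card_univ, Fintype.card_fin]
          have hsum2 : ∑ ℓ : Fin n, (occ L ℓ + n) = r*r + n*n := by
            rw [Finset.sum_add_distrib, sum_occ', Finset.sum_const, smul_eq_mul,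
              card_univ, Fintype.card_fin]
          have hZ : (r:ℤ)*r + n*n = n*(2*r) := by exact_mod_cast hsum1 ▸ hsum2.symm
          have hrnZ : (r:ℤ) < n := by exact_mod_cast hrn
          nlinarith [sq_nonneg ((n:ℤ) - r)]
        obtain ⟨d, hd⟩ := hex
        exact ⟨d, hd, by have := herase_le d; omega, fun h => absurd h (by omega)⟩
  obtain ⟨d, hdP1, hdP2, hdP3⟩ := hdex
  -- Step 2 : the forced symbol set F'
  set F₀ := univ.filter fun ℓ : Fin n => occ L ℓ + n = 2*r with hF₀def
  set F' := F₀ ∪ F₁.erase d with hF'def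
  have hdF' : d ∉ F' := by
    simp only [hF'def, Finset.mem_union, not_or]
    constructor
    · simp only [hF₀def, mem_filter, mem_univ, true_and]
      exact hdP1
    · exact Finset.notMem_erase d F₁
  have hF'lo : ∀ ℓ ∈ F', occ L ℓ + n = 2 * r ∨ occ L ℓ + n = 2 * r + 1 := by
    intro ℓ hℓ
    rcases Finset.mem_union.mp hℓ with h | h
    · exact Or.inl (Finset.mem_filter.mp h).2
    · exact Or.inr (Finset.mem_filter.mp (Finset.mem_of_mem_erase h)).2
  have hF'hi : (F'.filter fun ℓ => occ L ℓ + n = 2 * r + 1).card + r + 1 ≤ n := by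
    have hsub : (F'.filter fun ℓ => occ L ℓ + n = 2 * r + 1) ⊆ F₁.erase d := by
      intro ℓ hℓ
      obtain ⟨hm, he⟩ := Finset.mem_filter.mp hℓ
      rcases Finset.mem_union.mp hm with h | h
      · exact absurd (Finset.mem_filter.mp h).2 (by omega)
      · exact h
    have := Finset.card_le_card hsub
    omega
  -- Step 3 : Hall's theorem gives the new row
  obtain ⟨f, hfinj, hft⟩ := (Finset.all_card_le_biUnion_card_iff_exists_injective
    (fun ℓ : Fin n => univ.filter fun v : Fin n =>
      if h : v.val < r then (ℓ ≠ d ∧ ∀ i, L i (⟨v.val, h⟩ : Fin r) ≠ ℓ) else ℓ ∉ F')).mp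
    (hall_cond hrn hLcol h1 d F' hdP1 hdF' hF'lo hF'hi)
  have hfbij : Function.Bijective f := (Finite.injective_iff_bijective).mp hfinj
  set g := Equiv.ofBijective f hfbij with hg
  set σ : Fin r → Fin n := fun j => g.symm ⟨j.val, lt_trans j.isLt hrn⟩ with hσ
  have hfσ : ∀ j : Fin r, f (σ j) = ⟨j.val, lt_trans j.isLt hrn⟩ := fun j =>
    g.apply_symm_apply _
  have hσmem : ∀ j : Fin r, σ j ≠ d ∧ ∀ i, L i j ≠ σ j := by
    intro j
    have hm := hft (σ j)
    rw [hfσ j] at hm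
    simp only [mem_filter, mem_univ, true_and] at hm
    rw [dif_pos (show ((⟨j.val, lt_trans j.isLt hrn⟩ : Fin n)).val < r from j.isLt)] at hm
    have he : (⟨(⟨j.val, lt_trans j.isLt hrn⟩ : Fin n).val, j.isLt⟩ : Fin r) = j := Fin.ext rfl
    rwa [he] at hm
  have hσd : ∀ j, σ j ≠ d := fun j => (hσmem j).1
  have hσcompat : ∀ (j : Fin r) (i : Fin r), L i j ≠ σ j := fun j => (hσmem j).2
  have hσinj : Function.Injective σ := by
    intro j1 j2 h
    have hemb : (⟨j1.val, lt_trans j1.isLt hrn⟩ : Fin n)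
        = ⟨j2.val, lt_trans j2.isLt hrn⟩ := g.symm.injective h
    have hval : (j1 : ℕ) = (j2 : ℕ) := by simpa using hemb
    exact Fin.ext hval
  have hcover : ∀ ℓ ∈ F', ∃ j : Fin r, σ j = ℓ := by
    intro ℓ hℓ
    have hm := hft ℓ
    simp only [mem_filter, mem_univ, true_and] at hm
    by_cases hv : (f ℓ).val < r
    · refine ⟨⟨(f ℓ).val, hv⟩, ?_⟩
      have : (⟨(⟨(f ℓ).val, hv⟩ : Fin r).val, lt_trans hv hrn⟩ : Fin n) = f ℓ := Fin.ext rfl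
      rw [hσ]
      simp only
      rw [this]
      exact g.symm_apply_apply ℓ
    · rw [dif_neg hv] at hm
      exact absurd hℓ hm
  -- Step 4 : build the extended rectangle
  set L' : Fin (r+1) → Fin (r+1) → Fin n := fun i j =>
    if hi : i.val < r then
      (if hj : j.val < r then L ⟨i.val, hi⟩ ⟨j.val, hj⟩ else σ ⟨i.val, hi⟩)
    else (if hj : j.val < r then σ ⟨j.val, hj⟩ else d) with hL'def
  have hrestrict : ∀ i j : Fin r, L' i.castSucc j.castSucc = L i j := by
    intro i j
    simp only [hL'def]
    rw [dif_pos (show (Fin.castSucc i).val < r from i.isLt),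
       dif_pos (show (Fin.castSucc j).val < r from j.isLt)]
    have e1 : (⟨(Fin.castSucc i).val, i.isLt⟩ : Fin r) = i := Fin.ext rfl
    have e2 : (⟨(Fin.castSucc j).val, j.isLt⟩ : Fin r) = j := Fin.ext rfl
    rw [e1, e2]
  have hlastlt : ¬ (Fin.last r).val < r := by simp
  have hrowlast : ∀ j : Fin r, L' (Fin.last r) j.castSucc = σ j := by
    intro j
    simp only [hL'def]
    rw [dif_neg hlastlt, dif_pos (show (Fin.castSucc j).val < r from j.isLt)]
    exact congrArg σ (Fin.ext rfl)
  have hcollast : ∀ i : Fin r, L' i.castSucc (Fin.last r) = σ i := by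
    intro i
    simp only [hL'def]
    rw [dif_pos (show (Fin.castSucc i).val < r from i.isLt), dif_neg hlastlt]
    exact congrArg σ (Fin.ext rfl)
  have hdiag : L' (Fin.last r) (Fin.last r) = d := by
    simp only [hL'def]
    rw [dif_neg hlastlt, dif_neg hlastlt]
  have hsym' : ∀ i j, L' i j = L' j i := by
    intro i j
    simp only [hL'def]
    by_cases hi : i.val < r <;> by_cases hj : j.val < r
    · rw [dif_pos hi, dif_pos hj, dif_pos hj, dif_pos hi]
      exact hLsym _ _
    · rw [dif_pos hi, dif_neg hj, dif_neg hj, dif_pos hi]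
    · rw [dif_neg hi, dif_pos hj, dif_pos hj, dif_neg hi]
    · rw [dif_neg hi, dif_neg hj, dif_neg hj, dif_neg hi]
  -- latin property
  have hrow' : ∀ i, Function.Injective (L' i) := by
    intro i u v huv
    by_cases hi : i.val < r
    · by_cases hu : u.val < r <;> by_cases hv : v.val < r
      · -- both in old columns
        simp only [hL'def, dif_pos hi, dif_pos hu, dif_pos hv] at huv
        have := hLrow ⟨i.val, hi⟩ huv
        have hval : (u : ℕ) = (v : ℕ) := by simpa using this
        exact Fin.ext hval
      · -- u old, v new
        simp only [hL'def, dif_pos hi, dif_pos hu, dif_neg hv] at huv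
        exact absurd ((hLsym _ _).symm ▸ huv) (hσcompat ⟨i.val, hi⟩ ⟨u.val, hu⟩)
      · simp only [hL'def, dif_pos hi, dif_neg hu, dif_pos hv] at huv
        exact absurd ((hLsym _ _).symm ▸ huv.symm) (hσcompat ⟨i.val, hi⟩ ⟨v.val, hv⟩)
      · rw [eq_last_of_not_lt hu, eq_last_of_not_lt hv]
    · by_cases hu : u.val < r <;> by_cases hv : v.val < r
      · simp only [hL'def, dif_neg hi, dif_pos hu, dif_pos hv] at huv
        have := hσinj huv
        have hval : (u : ℕ) = (v : ℕ) := by simpa using this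
        exact Fin.ext hval
      · simp only [hL'def, dif_neg hi, dif_pos hu, dif_neg hv] at huv
        exact absurd huv (hσd _)
      · simp only [hL'def, dif_neg hi, dif_neg hu, dif_pos hv] at huv
        exact absurd huv.symm (hσd _)
      · rw [eq_last_of_not_lt hu, eq_last_of_not_lt hv]
  have hcol' : ∀ j, Function.Injective fun i => L' i j := by
    intro j
    have : (fun i => L' i j) = L' j := funext fun i => hsym' i j
    rw [this]
    exact hrow' j
  -- occurrence counts
  set cσ : Fin n → ℕ := fun ℓ => (univ.filter fun j : Fin r => σ j = ℓ).card with hcσdef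
  have hocc' : ∀ ℓ, occ L' ℓ = occ L ℓ + cσ ℓ + cσ ℓ + (if d = ℓ then 1 else 0) := by
    intro ℓ
    rw [occ_succ L' ℓ]
    have e0 : (fun i j : Fin r => L' i.castSucc j.castSucc) = L := by
      funext i j; exact hrestrict i j
    rw [e0]
    have e1 : (univ.filter fun i : Fin r => L' i.castSucc (Fin.last r) = ℓ)
        = univ.filter fun j : Fin r => σ j = ℓ := by
      apply Finset.filter_congr
      intro i _
      rw [hcollast i]
    have e2 : (univ.filter fun j : Fin r => L' (Fin.last r) j.castSucc = ℓ)
        = univ.filter fun j : Fin r => σ j = ℓ := by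
      apply Finset.filter_congr
      intro j _
      rw [hrowlast j]
    have e3 : (if L' (Fin.last r) (Fin.last r) = ℓ then 1 else 0)
        = (if d = ℓ then 1 else 0) := by rw [hdiag]
    rw [e1, e2, e3]
  have hcσ_le : ∀ ℓ, cσ ℓ ≤ 1 := by
    intro ℓ
    apply Finset.card_le_one.mpr
    intro a ha b hb
    simp only [hcσdef, mem_filter, mem_univ, true_and] at ha hb
    exact hσinj (ha.trans hb.symm)
  have hcσ_pos : ∀ ℓ, (∃ j, σ j = ℓ) → cσ ℓ = 1 := by
    intro ℓ ⟨j, hj⟩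
    have h1' : 1 ≤ cσ ℓ := Finset.card_pos.mpr ⟨j, by
      simp only [hcσdef, mem_filter, mem_univ, true_and]; exact hj⟩
    have := hcσ_le ℓ
    omega
  have hcσ_d : cσ d = 0 := by
    simp only [hcσdef, Finset.card_eq_zero]
    apply Finset.filter_false_of_mem
    intro j _
    exact hσd j
  refine ⟨L', ⟨hrow', hcol', hsym'⟩, hrestrict, ?_, ?_⟩
  · -- condition (i)
    intro ℓ
    rw [hocc' ℓ]
    by_cases hd : d = ℓ
    · subst hd
      rw [if_pos rfl, hcσ_d]
      have := h1 d
      omega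
    · rw [if_neg hd]
      by_cases hexσ : ∃ j, σ j = ℓ
      · rw [hcσ_pos ℓ hexσ]
        have := h1 ℓ
        omega
      · have hnot : occ L ℓ + n ≠ 2*r ∧ occ L ℓ + n ≠ 2*r + 1 := by
          constructor
          · intro h
            exact hexσ (hcover ℓ (Finset.mem_union_left _ (by
              simp only [hF₀def, mem_filter, mem_univ, true_and]; exact h)))
          · intro h
            refine hexσ (hcover ℓ (Finset.mem_union_right _ ?_))
            apply Finset.mem_erase_of_ne_of_mem (fun he => hd he.symm)
            simp only [hF₁def, mem_filter, mem_univ, true_and]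
            exact h
        have := h1 ℓ
        omega
  · -- condition (ii)
    have hpar : ∀ ℓ, ¬ (d = ℓ) → occ L' ℓ % 2 = occ L ℓ % 2 := by
      intro ℓ hne
      rw [hocc' ℓ, if_neg hne]
      omega
    have hoccd : occ L' d = occ L d + 1 := by
      rw [hocc' d, if_pos rfl, hcσ_d]
    by_cases hs : S.card ≤ r + 1
    · have hdpar := hdP3 hs
      have hdS : d ∉ S := fun h => hdpar (Finset.mem_filter.mp h).2
      have hsub : insert d S ⊆ univ.filter fun ℓ : Fin n => occ L' ℓ % 2 = n % 2 := by
        intro x hx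
        rcases Finset.mem_insert.mp hx with rfl | hxS
        · simp only [mem_filter, mem_univ, true_and]
          rw [hoccd]
          omega
        · simp only [mem_filter, mem_univ, true_and]
          have hxd : ¬ (d = x) := fun h => hdS (h ▸ hxS)
          rw [hpar x hxd]
          exact (Finset.mem_filter.mp hxS).2
      have := Finset.card_le_card hsub
      rw [Finset.card_insert_of_notMem hdS] at this
      omega
    · have hsub : S.erase d ⊆ univ.filter fun ℓ : Fin n => occ L' ℓ % 2 = n % 2 := by
        intro x hx
        simp only [mem_filter, mem_univ, true_and]
        have hxd : ¬ (d = x) := fun h => (Finset.ne_of_mem_erase hx) h.symm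
        rw [hpar x hxd]
        exact (Finset.mem_filter.mp (Finset.mem_of_mem_erase hx)).2
      have hle := Finset.card_le_card hsub
      have : S.card - 1 ≤ (S.erase d).card := by
        have := Finset.card_erase_of_mem (a := d) (s := S)
        by_cases hdS : d ∈ S
        · rw [this hdS]
        · rw [Finset.erase_eq_of_notMem hdS]; omega
      omega

lemma suffice_aux {n : ℕ} (k : ℕ) : ∀ (r : ℕ) (h : r + k = n) (L : Fin r → Fin r → Fin n),
    IsSymLatinRect L → (∀ ℓ, 2 * r ≤ occ L ℓ + n) →
    (r ≤ (univ.filter fun ℓ : Fin n => occ L ℓ % 2 = n % 2).card) →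
    ∃ A : Fin n → Fin n → Fin n, IsSymLS A ∧ Extends (Nat.le.intro h) L A := by
  induction k with
  | zero =>
    intro r h L hL h1 h2
    have e : r = n := by omega
    refine ⟨fun i j => L (Fin.cast e.symm i) (Fin.cast e.symm j), ⟨?_, ?_, ?_⟩, ?_⟩
    · intro i
      apply Finite.injective_iff_bijective.mp
      intro a b hab
      exact (Fin.cast_injective e.symm) (hL.1 _ hab)
    · intro j
      apply Finite.injective_iff_bijective.mp
      intro a b hab
      exact (Fin.cast_injective e.symm) (hL.2.1 _ hab)
    · intro i j
      exact hL.2.2 _ _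
    · intro i j
      have e1 : Fin.cast e.symm (Fin.castLE (Nat.le.intro h) i) = i := Fin.ext rfl
      have e2 : Fin.cast e.symm (Fin.castLE (Nat.le.intro h) j) = j := Fin.ext rfl
      show L (Fin.cast e.symm (Fin.castLE (Nat.le.intro h) i))
        (Fin.cast e.symm (Fin.castLE (Nat.le.intro h) j)) = L i j
      rw [e1, e2]
  | succ k ih =>
    intro r h L hL h1 h2
    have hrn' : r < n := by omega
    obtain ⟨L', hL', hrestrict, h1', h2'⟩ := extend_step hrn' L hL h1 h2
    obtain ⟨A, hA, hE'⟩ := ih (r + 1) (by omega) L' hL' h1' h2'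
    refine ⟨A, hA, ?_⟩
    intro i j
    have e1 : Fin.castLE (Nat.le.intro h) i
        = Fin.castLE (Nat.le.intro (show (r+1) + k = n by omega)) (Fin.castSucc i) :=
      Fin.ext rfl
    have e2 : Fin.castLE (Nat.le.intro h) j
        = Fin.castLE (Nat.le.intro (show (r+1) + k = n by omega)) (Fin.castSucc j) :=
      Fin.ext rfl
    rw [e1, e2, hE' (Fin.castSucc i) (Fin.castSucc j), hrestrict i j]

/-- Cruse's theorem. -/
theorem cruse (n r : ℕ) (hrn : r ≤ n)
    (L : Fin r → Fin r → Fin n) (hL : IsSymLatinRect L) :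
    (∃ A : Fin n → Fin n → Fin n, IsSymLS A ∧ Extends hrn L A) ↔
      (∀ ℓ, 2 * r ≤ occ L ℓ + n) ∧
      r ≤ (Finset.univ.filter fun ℓ : Fin n => occ L ℓ % 2 = n % 2).card := by
  constructor
  · rintro ⟨A, hA, hE⟩
    exact necessity hrn L hL A hA hE
  · rintro ⟨h1, h2⟩
    obtain ⟨A, hA, hE⟩ := suffice_aux (n - r) r (by omega) L hL h1 h2
    exact ⟨A, hA, hE⟩
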